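/- Let G be a group and m ≥ 1 a natural number. Then G has a proper subgroup of finite index at most m if and only if the quotient G ⧸ frattini G has a proper subgroup of finite index at most m. Formally: (∃ H : Subgroup G, 1 < H.index ∧ H.index ≤ m) ↔ (∃ H' : Subgroup (G ⧸ frattini G), 1 < H'.index ∧ H'.index ≤ m). -/
import Mathlib

lemma exists_coatom_of_index (G : Type*) [Group G] :
    ∀ n : ℕ, ∀ H : Subgroup G, H.index = n → 1 < H.index →
      ∃ M : Subgroup G, IsCoatom M ∧ H ≤ M ∧ M.index ≤ H.index := by
  intro n
  induction n using Nat.strong_induction_on with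
  | _ n ih =>
    intro H hn h1
    have hfi : H.FiniteIndex := ⟨by omega⟩
    by_cases hc : IsCoatom H
    · exact ⟨H, hc, le_rfl, le_rfl⟩
    · have hne : H ≠ ⊤ := by
        intro h; rw [h, Subgroup.index_top] at h1; omega
      obtain ⟨K, hK, hKne'⟩ : ∃ K, H < K ∧ K ≠ ⊤ := by
        by_contra h
        push_neg at h
        exact hc ⟨hne, h⟩
      have hlt : K.index < H.index := Subgroup.index_strictAnti hK
      have hK1 : 1 < K.index := by
        have : K.index ≠ 1 := fun h => hKne' (Subgroup.index_eq_one.mp h)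
        have : K.index ≠ 0 := (Subgroup.finiteIndex_of_le hK.le).index_ne_zero
        omega
      obtain ⟨M, hM, hKM, hMle⟩ := ih K.index (hn ▸ hlt) K rfl hK1
      exact ⟨M, hM, hK.le.trans hKM, hMle.trans hlt.le⟩

/-- A group `G` has a proper subgroup of finite index at most `m` iff the quotient of `G`
by its Frattini subgroup has one. -/
theorem small_index_subgroup_iff_frattini_quotient
    (G : Type*) [Group G] (m : ℕ) (hm : 1 ≤ m) :
    (∃ H : Subgroup G, 1 < H.index ∧ H.index ≤ m) ↔
      (∃ H' : Subgroup (G ⧸ frattini G), 1 < H'.index ∧ H'.index ≤ m) := by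
  constructor
  · rintro ⟨H, h1, h2⟩
    obtain ⟨M, hM, hHM, hMle⟩ := exists_coatom_of_index G H.index H rfl h1
    have hker : (QuotientGroup.mk' (frattini G)).ker ≤ M := by
      rw [QuotientGroup.ker_mk']
      exact frattini_le_coatom hM
    refine ⟨M.map (QuotientGroup.mk' (frattini G)), ?_, ?_⟩
    · rw [Subgroup.index_map_eq M (QuotientGroup.mk'_surjective _) hker]
      have h1' : M.index ≠ 1 := fun h => hM.1 (Subgroup.index_eq_one.mp h)
      have h0 : M.index ≠ 0 := by
        have hfin : H.FiniteIndex := ⟨by omega⟩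
        exact (Subgroup.finiteIndex_of_le (le_of_eq rfl |>.trans hHM)).index_ne_zero
      omega
    · rw [Subgroup.index_map_eq M (QuotientGroup.mk'_surjective _) hker]
      exact hMle.trans h2
  · rintro ⟨H', h1, h2⟩
    refine ⟨H'.comap (QuotientGroup.mk' (frattini G)), ?_, ?_⟩ <;>
      rw [Subgroup.index_comap_of_surjective _ (QuotientGroup.mk'_surjective _)] <;>
      assumption
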